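/- Let p ≥ 3 and k ≥ 1 be integers, let G = G^{2,1}_{p,pk+1}, and let λ' denote the element x(xy)^{(p−1)k+1}x(xy)^{−((p−1)k+1)}(xy)^k x(xy)^{(p−1)k+1}x of G. Suppose ρ : G → Homeo⁺(ℝ) is a group homomorphism such that ρ(x)α > α for all α ∈ ℝ. Then ρ(x^{−(pk+p+2)} λ')α > ρ(y)α for all α ∈ ℝ. -/

import Mathlib

def X : FreeGroup (Fin 2) := FreeGroup.of 0
def Y : FreeGroup (Fin 2) := FreeGroup.of 1

/-- The relator of the knot group `G^{2,1}_{p,pk+1}`: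
`x(xy)^{(p-1)k+1}x = (xy)^{(p-2)k+1}((xy)^k x)^{-(p-2)}(xy)^{(p-1)k+1}`. -/
def relF (p k : ℤ) : FreeGroup (Fin 2) :=
  X * (X * Y) ^ ((p - 1) * k + 1) * X *
    ((X * Y) ^ ((p - 2) * k + 1) * ((X * Y) ^ k * X) ^ (-(p - 2)) *
      (X * Y) ^ ((p - 1) * k + 1))⁻¹

namespace OI17

lemma mulApply (f g : ℝ ≃o ℝ) (α : ℝ) : (f * g) α = f (g α) := rfl

lemma zpowAdd (f : ℝ ≃o ℝ) (m n : ℤ) (α : ℝ) :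
    (f ^ (m + n)) α = (f ^ m) ((f ^ n) α) := by
  rw [zpow_add]; rfl

lemma cancel (f : ℝ ≃o ℝ) (m : ℤ) (α : ℝ) : (f ^ (-m)) ((f ^ m) α) = α := by
  rw [← zpowAdd, neg_add_cancel, zpow_zero]; rfl

lemma powLe {f g : ℝ ≃o ℝ} (h : ∀ α, f α ≤ g α) :
    ∀ (n : ℕ) (α : ℝ), (f ^ n) α ≤ (g ^ n) α := by
  intro n
  induction n with
  | zero => intro α; rw [pow_zero, pow_zero]
  | succ n ih =>
    intro α
    have e1 : (f ^ (n + 1)) α = (f ^ n) (f α) := by rw [pow_succ]; rfl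
    have e2 : (g ^ (n + 1)) α = (g ^ n) (g α) := by rw [pow_succ]; rfl
    rw [e1, e2]
    calc (f ^ n) (f α) ≤ (g ^ n) (f α) := ih _
      _ ≤ (g ^ n) (g α) := (g ^ n : ℝ ≃o ℝ).le_iff_le.mpr (h α)

lemma zpowLe {f g : ℝ ≃o ℝ} (h : ∀ α, f α ≤ g α) {n : ℤ} (hn : 0 ≤ n) :
    ∀ α : ℝ, (f ^ n) α ≤ (g ^ n) α := by
  lift n to ℕ using hn
  intro α
  rw [zpow_natCast, zpow_natCast]
  exact powLe h n α

lemma conjPos {f : ℝ ≃o ℝ} (hf : ∀ α, α < f α) (u : ℝ ≃o ℝ) (α : ℝ) :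
    α < u (f (u⁻¹ α)) := by
  have h2 : u⁻¹ α < f (u⁻¹ α) := hf _
  have h3 : u (u⁻¹ α) < u (f (u⁻¹ α)) := u.lt_iff_lt.mpr h2
  have h4 : u (u⁻¹ α) = α := by
    have h5 : u (u⁻¹ α) = (u * u⁻¹) α := rfl
    rw [h5, mul_inv_cancel]; rfl
  rw [h4] at h3; exact h3

lemma zpowPred (f : ℝ ≃o ℝ) (m : ℤ) (α : ℝ) : (f ^ m) α = (f ^ (m - 1)) (f α) := by
  have h := zpowAdd f (m - 1) 1 α
  have e : (m - 1 + 1 : ℤ) = m := by ring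
  rw [e, zpow_one] at h
  exact h

lemma zpowSuccL (f : ℝ ≃o ℝ) (m : ℤ) (α : ℝ) : (f ^ (m + 1)) α = f ((f ^ m) α) := by
  have h := zpowAdd f 1 m α
  have e : (1 + m : ℤ) = m + 1 := by ring
  rw [e, zpow_one] at h
  exact h

end OI17

open OI17 in
theorem statement17 (p k : ℤ) (hp : 3 ≤ p) (hk : 1 ≤ k)
    (x y lam : PresentedGroup ({relF p k} : Set (FreeGroup (Fin 2))))
    (hx : x = PresentedGroup.of 0) (hy : y = PresentedGroup.of 1)
    (hlam : lam = x * (x * y) ^ ((p - 1) * k + 1) * x *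
      (x * y) ^ (-((p - 1) * k + 1)) * (x * y) ^ k * x *
      (x * y) ^ ((p - 1) * k + 1) * x)
    (ρ : PresentedGroup ({relF p k} : Set (FreeGroup (Fin 2))) →* (ℝ ≃o ℝ))
    (hρ : ∀ α : ℝ, α < ρ x α) :
    ∀ α : ℝ, ρ y α < ρ (x ^ (-(p * k + p + 2)) * lam) α := by
  -- ### Part 1: the group-theoretic identity
  obtain ⟨c, hc⟩ : ∃ c, c = x * y := ⟨_, rfl⟩
  obtain ⟨g, hg⟩ : ∃ g, g = c ^ k * x := ⟨_, rfl⟩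
  have hR : x * c ^ ((p - 1) * k + 1) * x =
      c ^ ((p - 2) * k + 1) * g ^ (-(p - 2)) * c ^ ((p - 1) * k + 1) := by
    have hrel1 : PresentedGroup.mk {relF p k} (relF p k) = 1 :=
      (QuotientGroup.eq_one_iff _).mpr (Subgroup.subset_normalClosure (Set.mem_singleton _))
    replace hrel1 : PresentedGroup.mk ({relF p k} : Set (FreeGroup (Fin 2)))
        (X * (X * Y) ^ ((p - 1) * k + 1) * X *
          ((X * Y) ^ ((p - 2) * k + 1) * ((X * Y) ^ k * X) ^ (-(p - 2)) *
            (X * Y) ^ ((p - 1) * k + 1))⁻¹) = 1 := hrel1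
    simp only [X, Y, map_mul, map_zpow, map_inv] at hrel1
    rw [mul_inv_eq_one] at hrel1
    rw [hg, hc, hx, hy]
    exact hrel1
  have hxg : x * g⁻¹ = c ^ (-k) := by rw [hg]; group
  have hE3 : lam = x * c ^ ((p - 2) * k + 1) * g ^ (-(p - 3)) * c ^ ((p - 1) * k + 1) := by
    calc lam = (x * c ^ ((p - 1) * k + 1)) * ((x * c ^ (-((p - 1) * k + 1))) * (c ^ k *
          (x * c ^ ((p - 1) * k + 1) * x))) := by rw [hlam, ← hc]; group
      _ = (x * c ^ ((p - 1) * k + 1)) * ((x * c ^ (-((p - 1) * k + 1))) * (c ^ k *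
          (c ^ ((p - 2) * k + 1) * g ^ (-(p - 2)) * c ^ ((p - 1) * k + 1)))) := by rw [hR]
      _ = (x * c ^ ((p - 1) * k + 1)) * ((x * g⁻¹) * g ^ (-(p - 3))) * c ^ ((p - 1) * k + 1) := by
          group
      _ = (x * c ^ ((p - 1) * k + 1)) * (c ^ (-k) * g ^ (-(p - 3))) * c ^ ((p - 1) * k + 1) := by
          rw [hxg]
      _ = x * c ^ ((p - 2) * k + 1) * g ^ (-(p - 3)) * c ^ ((p - 1) * k + 1) := by group
  have hIT : x * x * c ^ ((p - 1) * k + 1) * x * c ^ (-((p - 2) * k + 1)) * x *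
      c ^ ((p - 1) * k + 1) =
      x * c ^ ((p - 2) * k + 1) * g ^ (-(p - 3)) * c ^ ((p - 1) * k + 1) := by
    calc x * x * c ^ ((p - 1) * k + 1) * x * c ^ (-((p - 2) * k + 1)) * x *
        c ^ ((p - 1) * k + 1)
        = x * (x * c ^ ((p - 1) * k + 1) * x) *
            (c ^ (-((p - 2) * k + 1)) * (x * c ^ ((p - 1) * k + 1))) := by group
      _ = x * (c ^ ((p - 2) * k + 1) * g ^ (-(p - 2)) * c ^ ((p - 1) * k + 1)) *
            (c ^ (-((p - 2) * k + 1)) * (x * c ^ ((p - 1) * k + 1))) := by rw [hR]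
      _ = x * c ^ ((p - 2) * k + 1) * g ^ (-(p - 2)) * (c ^ k * x) *
            c ^ ((p - 1) * k + 1) := by group
      _ = x * c ^ ((p - 2) * k + 1) * g ^ (-(p - 2)) * g * c ^ ((p - 1) * k + 1) := by
          rw [← hg]
      _ = x * c ^ ((p - 2) * k + 1) * g ^ (-(p - 3)) * c ^ ((p - 1) * k + 1) := by group
  have hI : lam = x * x * c ^ ((p - 1) * k + 1) * x * c ^ (-((p - 2) * k + 1)) * x *
      c ^ ((p - 1) * k + 1) := hE3.trans hIT.symm
  -- ### Part 2: transport to `ℝ ≃o ℝ`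
  obtain ⟨a, ha⟩ : ∃ t, t = ρ x := ⟨_, rfl⟩
  obtain ⟨b, hb⟩ : ∃ t, t = ρ y := ⟨_, rfl⟩
  obtain ⟨C, hC⟩ : ∃ t, t = ρ c := ⟨_, rfl⟩
  obtain ⟨Gg, hGg⟩ : ∃ t, t = ρ g := ⟨_, rfl⟩
  have hpa : ∀ α : ℝ, α < a α := by rw [ha]; exact hρ
  have hCab : C = a * b := by rw [hC, hc, map_mul, ← ha, ← hb]
  have hGa : Gg = C ^ k * a := by rw [hGg, hg, map_mul, map_zpow, ← hC, ← ha]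
  have hRρ : a * C ^ ((p - 1) * k + 1) * a =
      C ^ ((p - 2) * k + 1) * Gg ^ (-(p - 2)) * C ^ ((p - 1) * k + 1) := by
    have h := congrArg ρ hR
    simp only [map_mul, map_zpow] at h
    rw [← ha, ← hC, ← hGg] at h
    exact h
  have hLρ : ρ lam = a * a * C ^ ((p - 1) * k + 1) * a * C ^ (-((p - 2) * k + 1)) * a *
      C ^ ((p - 1) * k + 1) := by
    rw [hI]
    simp only [map_mul, map_zpow]
    rw [← ha, ← hC]
  have hCBkey : C ^ ((p - 2) * k + 1) =
      (a * C ^ ((p - 1) * k + 1) * a) * ((C ^ ((p - 1) * k + 1))⁻¹ * Gg ^ (p - 2)) := by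
    rw [hRρ]; group
  -- ### Part 3: pointwise estimates
  have h1 : ∀ γ : ℝ, a ((Gg ^ (p - 2)) γ) < (C ^ ((p - 2) * k + 1)) γ := by
    intro γ
    have e : (C ^ ((p - 2) * k + 1)) γ =
        a ((C ^ ((p - 1) * k + 1)) (a ((C ^ ((p - 1) * k + 1))⁻¹ ((Gg ^ (p - 2)) γ)))) := by
      rw [hCBkey]; rfl
    rw [e]
    exact a.lt_iff_lt.mpr (conjPos hpa (C ^ ((p - 1) * k + 1)) _)
  have hCkGa : ∀ δ : ℝ, (C ^ k) δ ≤ Gg δ := by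
    intro δ
    have e : Gg δ = (C ^ k) (a δ) := by rw [hGa]; rfl
    rw [e]
    exact (C ^ k : ℝ ≃o ℝ).le_iff_le.mpr (le_of_lt (hpa δ))
  have hCk : ∀ γ : ℝ, (C ^ (k * (p - 2))) γ ≤ (Gg ^ (p - 2)) γ := by
    intro γ
    have h2 := zpowLe hCkGa (n := p - 2) (by linarith) γ
    rw [← zpow_mul] at h2
    exact h2
  have hCa : ∀ δ : ℝ, a δ < C δ := by
    intro δ
    have e2 : (C ^ (k * (p - 2))) ((C ^ (-(k * (p - 2)))) δ) = δ := by
      rw [← zpowAdd, add_neg_cancel, zpow_zero]; rfl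
    have e1 : (C ^ ((p - 2) * k + 1)) ((C ^ (-(k * (p - 2)))) δ) = C δ := by
      rw [← zpowAdd]
      have h' : ((p - 2) * k + 1 + -(k * (p - 2)) : ℤ) = 1 := by ring
      rw [h', zpow_one]
    calc a δ = a ((C ^ (k * (p - 2))) ((C ^ (-(k * (p - 2)))) δ)) := by rw [e2]
      _ ≤ a ((Gg ^ (p - 2)) ((C ^ (-(k * (p - 2)))) δ)) := a.le_iff_le.mpr (hCk _)
      _ < (C ^ ((p - 2) * k + 1)) ((C ^ (-(k * (p - 2)))) δ) := h1 _
      _ = C δ := e1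
  have hCale : ∀ δ : ℝ, a δ ≤ C δ := fun δ => le_of_lt (hCa δ)
  have hGale : ∀ δ : ℝ, (a ^ (k + 1)) δ ≤ Gg δ := by
    intro δ
    have e4 : (a ^ (k + 1)) δ = (a ^ k) (a δ) := by
      rw [zpowAdd, zpow_one]
    have e5 : Gg δ = (C ^ k) (a δ) := by rw [hGa]; rfl
    rw [e4, e5]
    exact zpowLe hCale (by linarith) _
  have hD5 : ∀ γ : ℝ, (a ^ ((p - 2) * k + 1 + (p - 2))) γ < (C ^ ((p - 2) * k + 1)) γ := by
    intro γ
    have h5 : ((a ^ (k + 1)) ^ (p - 2)) γ ≤ (Gg ^ (p - 2)) γ := zpowLe hGale (by linarith) γ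
    have e : (a ^ ((p - 2) * k + 1 + (p - 2))) γ = a (((a ^ (k + 1)) ^ (p - 2)) γ) := by
      rw [← zpow_mul]
      have h' : ((p - 2) * k + 1 + (p - 2) : ℤ) = 1 + (k + 1) * (p - 2) := by ring
      rw [h', zpowAdd, zpow_one]
    rw [e]
    calc a (((a ^ (k + 1)) ^ (p - 2)) γ) ≤ a ((Gg ^ (p - 2)) γ) := a.le_iff_le.mpr h5
      _ < (C ^ ((p - 2) * k + 1)) γ := h1 γ
  have hCAD : ∀ γ : ℝ, (a ^ ((p - 1) * k + 1 + (p - 2))) γ < (C ^ ((p - 1) * k + 1)) γ := by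
    intro γ
    have e : (C ^ ((p - 1) * k + 1)) γ = (C ^ k) ((C ^ ((p - 2) * k + 1)) γ) := by
      have h' : ((p - 1) * k + 1 : ℤ) = k + ((p - 2) * k + 1) := by ring
      rw [h', zpowAdd]
    have e2 : (a ^ ((p - 1) * k + 1 + (p - 2))) γ =
        (a ^ k) ((a ^ ((p - 2) * k + 1 + (p - 2))) γ) := by
      rw [← zpowAdd]
      have h' : ((p - 1) * k + 1 + (p - 2) : ℤ) = k + ((p - 2) * k + 1 + (p - 2)) := by ring
      rw [h']
    rw [e, e2]
    calc (a ^ k) ((a ^ ((p - 2) * k + 1 + (p - 2))) γ)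
        ≤ (C ^ k) ((a ^ ((p - 2) * k + 1 + (p - 2))) γ) := zpowLe hCale (by linarith) _
      _ < (C ^ k) ((C ^ ((p - 2) * k + 1)) γ) := (C ^ k : ℝ ≃o ℝ).lt_iff_lt.mpr (hD5 γ)
  -- ### Part 4: the main chain
  intro α
  have hCα : C α = a (b α) := by rw [hCab]; rfl
  have hv0 : (C ^ ((p - 1) * k + 1)) α =
      (C ^ ((p - 2) * k + 1)) ((C ^ (k - 1)) (a (b α))) := by
    rw [zpowPred C ((p - 1) * k + 1) α, hCα]
    have h2 := zpowAdd C ((p - 2) * k + 1) (k - 1) (a (b α))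
    have h3 : ((p - 2) * k + 1 + (k - 1) : ℤ) = (p - 1) * k + 1 - 1 := by ring
    rw [h3] at h2
    exact h2
  have einv : (C ^ (-((p - 2) * k + 1)) : ℝ ≃o ℝ)⁻¹ = C ^ ((p - 2) * k + 1) := by
    rw [zpow_neg, inv_inv]
  have hstep1 : (a ^ k) (b α) <
      (C ^ (-((p - 2) * k + 1))) (a ((C ^ ((p - 1) * k + 1)) α)) := by
    have h11 := conjPos hpa (C ^ (-((p - 2) * k + 1))) ((C ^ (k - 1)) (a (b α)))
    rw [einv, ← hv0] at h11
    have h12 : (a ^ k) (b α) ≤ (C ^ (k - 1)) (a (b α)) := by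
      rw [zpowPred a k (b α)]
      exact zpowLe hCale (by linarith) _
    exact lt_of_le_of_lt h12 h11
  have hstep2 : (a ^ (k + 1)) (b α) <
      a ((C ^ (-((p - 2) * k + 1))) (a ((C ^ ((p - 1) * k + 1)) α))) := by
    rw [zpowSuccL a k (b α)]
    exact a.lt_iff_lt.mpr hstep1
  have hstep3 : (a ^ ((p - 1) * k + 1 + (p - 2) + (k + 1))) (b α) <
      (C ^ ((p - 1) * k + 1))
        (a ((C ^ (-((p - 2) * k + 1))) (a ((C ^ ((p - 1) * k + 1)) α)))) := by
    have h13 := hCAD (a ((C ^ (-((p - 2) * k + 1))) (a ((C ^ ((p - 1) * k + 1)) α))))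
    have h14 := (a ^ ((p - 1) * k + 1 + (p - 2)) : ℝ ≃o ℝ).lt_iff_lt.mpr hstep2
    have e5 := zpowAdd a ((p - 1) * k + 1 + (p - 2)) (k + 1) (b α)
    rw [e5]
    exact lt_trans h14 h13
  have key : (a ^ (p * k + p + 2)) (b α) <
      a (a ((C ^ ((p - 1) * k + 1))
        (a ((C ^ (-((p - 2) * k + 1))) (a ((C ^ ((p - 1) * k + 1)) α)))))) := by
    have h15 := a.lt_iff_lt.mpr (a.lt_iff_lt.mpr hstep3)
    have h' : (p * k + p + 2 : ℤ) = ((p - 1) * k + 1 + (p - 2) + (k + 1)) + 1 + 1 := by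
      ring
    rw [h', zpowSuccL, zpowSuccL]
    exact h15
  rw [map_mul, map_zpow, mulApply, hLρ, ← ha, ← hb]
  have key2 : (a ^ (p * k + p + 2)) (b α) <
      (a * a * C ^ ((p - 1) * k + 1) * a * C ^ (-((p - 2) * k + 1)) * a *
        C ^ ((p - 1) * k + 1)) α := key
  calc b α = (a ^ (-(p * k + p + 2))) ((a ^ (p * k + p + 2)) (b α)) := (cancel a _ _).symm
    _ < (a ^ (-(p * k + p + 2)))
        ((a * a * C ^ ((p - 1) * k + 1) * a * C ^ (-((p - 2) * k + 1)) * a *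
          C ^ ((p - 1) * k + 1)) α) :=
      (a ^ (-(p * k + p + 2)) : ℝ ≃o ℝ).lt_iff_lt.mpr key2
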